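/- Let P be a finite set of positive integers and m = min P. Then every p ∈ P is a period of FW(P,n), and moreover FW(P,n) is an FW-word: any word w of length n having all periods in P satisfies w[i] = w[j] whenever [i]_{P,n} = [j]_{P,n}. Consequently, the number of distinct letters in any word of length n with periods P is at most the number of equivalence classes of ≈_{P,n}. -/
import Mathlib


/-- minimum of a finite set of naturals (as `sInf`). -/
noncomputable def mP (P : Finset ℕ) : ℕ := sInf (↑P : Set ℕ)

/-- the generating relation `∼_{P,k}` on `{0,…,k-1}`. -/
def simRel (P : Finset ℕ) (k i j : ℕ) : Prop :=
  i < k ∧ j < k ∧ (i % mP P = j % mP P ∨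
    ∃ i' j', i' < k ∧ j' < k ∧ i' % mP P = i % mP P ∧ j' % mP P = j % mP P ∧
      (max i' j' - min i' j') ∈ P)

/-- the class of `i` under the equivalence closure `≈_{P,k}`. -/
def cls (P : Finset ℕ) (k i : ℕ) : Set ℕ := {j | Relation.EqvGen (simRel P k) i j}

/-- the FW-word: `FW P k i = min [i]_{P,k}`. -/
noncomputable def FW (P : Finset ℕ) (k : ℕ) : ℕ → ℕ := fun i => sInf (cls P k i)

/-- Euclidean reduction `Q = {p - m : p ∈ P, p ≠ m} ∪ {m}`. -/
noncomputable def Qred (P : Finset ℕ) : Finset ℕ :=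
  ((P.erase (mP P)).image (fun p => p - mP P)) ∪ {mP P}

/-- `p` is a period of the word `w` of length `n`. -/
def HasPeriodF {A : Type*} (w : ℕ → A) (n p : ℕ) : Prop :=
  ∀ i, i + p < n → w i = w (i + p)

theorem stmt7 {A : Type*} [DecidableEq A] (P : Finset ℕ) (hP : P.Nonempty)
    (hpos : ∀ p ∈ P, 0 < p) (n : ℕ) (w : ℕ → A)
    (hw : ∀ p ∈ P, HasPeriodF w n p) :
    (∀ p ∈ P, HasPeriodF (FW P n) n p) ∧
    (∀ i j, i < n → j < n → cls P n i = cls P n j → w i = w j) ∧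
    ((Finset.range n).image w).card ≤ ((Finset.range n).image (FW P n)).card := by
  classical
  have hmP : mP P ∈ P := Nat.sInf_mem (by exact_mod_cast hP)
  have hm0 : 0 < mP P := hpos _ hmP
  -- step by multiples of m
  have stepA : ∀ k i, i + k * mP P < n → w i = w (i + k * mP P) := by
    intro k
    induction k with
    | zero => intro i _; simp
    | succ k ih =>
      intro i h
      have h1 : i + mP P + k * mP P < n := by
        have : i + (k+1) * mP P = i + mP P + k * mP P := by ring
        omega
      have h2 : i + mP P < n := by omega
      have e1 : w i = w (i + mP P) := hw _ hmP i h2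
      have e2 := ih (i + mP P) h1
      have e3 : i + mP P + k * mP P = i + (k+1) * mP P := by ring
      rw [e1, e2, e3]
  have resA : ∀ i j, i < n → j < n → i % mP P = j % mP P → w i = w j := by
    intro i j hi hj hij
    rcases le_total i j with hle | hle
    · obtain ⟨k, hk⟩ : mP P ∣ j - i := (Nat.modEq_iff_dvd' hle).mp hij
      have hk' : j = i + k * mP P := by rw [mul_comm, ← hk]; omega
      rw [hk']; exact stepA k i (hk' ▸ hj)
    · obtain ⟨k, hk⟩ : mP P ∣ i - j := (Nat.modEq_iff_dvd' hle).mp hij.symm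
      have hk' : i = j + k * mP P := by rw [mul_comm, ← hk]; omega
      rw [hk']; exact (stepA k j (hk' ▸ hi)).symm
  have simStep : ∀ i j, simRel P n i j → w i = w j := by
    rintro i j ⟨hi, hj, h | ⟨i', j', hi', hj', hri, hrj, hp⟩⟩
    · exact resA i j hi hj h
    · have h1 : w i = w i' := resA i i' hi hi' hri.symm
      have h2 : w j = w j' := resA j j' hj hj' hrj.symm
      have h3 : w i' = w j' := by
        rcases le_total i' j' with hle | hle
        · rw [max_eq_right hle, min_eq_left hle] at hp
          have := hw _ hp i' (by omega)
          have e : i' + (j' - i') = j' := by omega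
          rwa [e] at this
        · rw [max_eq_left hle, min_eq_right hle] at hp
          have := hw _ hp j' (by omega)
          have e : j' + (i' - j') = i' := by omega
          rw [e] at this
          exact this.symm
      rw [h1, h3, ← h2]
  have eqvStep : ∀ i j, Relation.EqvGen (simRel P n) i j → w i = w j := by
    intro i j h
    induction h with
    | rel a b hab => exact simStep a b hab
    | refl a => rfl
    | symm a b _ ih => exact ih.symm
    | trans a b c _ _ ih1 ih2 => exact ih1.trans ih2
  have clsEq : ∀ i j, Relation.EqvGen (simRel P n) i j → cls P n i = cls P n j := by
    intro i j h
    ext x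
    exact ⟨fun hx => Relation.EqvGen.trans _ _ _ (Relation.EqvGen.symm _ _ h) hx,
           fun hx => Relation.EqvGen.trans _ _ _ h hx⟩
  have part2 : ∀ i j, i < n → j < n → cls P n i = cls P n j → w i = w j := by
    intro i j hi hj hc
    have hj' : j ∈ cls P n i := by rw [hc]; exact Relation.EqvGen.refl j
    exact eqvStep i j hj'
  have part1 : ∀ p ∈ P, HasPeriodF (FW P n) n p := by
    intro p hp i hin
    have hpp := hpos p hp
    have hsim : simRel P n i (i + p) :=
      ⟨by omega, hin, Or.inr ⟨i, i + p, by omega, hin, rfl, rfl, by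
        rw [max_eq_right (by omega), min_eq_left (by omega)]
        simpa using hp⟩⟩
    show sInf (cls P n i) = sInf (cls P n (i + p))
    rw [clsEq i (i+p) (Relation.EqvGen.rel _ _ hsim)]
  refine ⟨part1, part2, ?_⟩
  have clsmem : ∀ i, FW P n i ∈ cls P n i := by
    intro i
    exact Nat.sInf_mem ⟨i, Relation.EqvGen.refl i⟩
  have clsFW : ∀ i, cls P n (FW P n i) = cls P n i :=
    fun i => (clsEq i _ (clsmem i)).symm
  have ltlem : ∀ i j, Relation.EqvGen (simRel P n) i j → i = j ∨ (i < n ∧ j < n) := by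
    intro i j h
    induction h with
    | rel a b hab => exact Or.inr ⟨hab.1, hab.2.1⟩
    | refl a => exact Or.inl rfl
    | symm a b _ ih =>
      rcases ih with h | h
      · exact Or.inl h.symm
      · exact Or.inr ⟨h.2, h.1⟩
    | trans a b c _ _ ih1 ih2 =>
      rcases ih1 with h1 | h1 <;> rcases ih2 with h2 | h2
      · exact Or.inl (h1.trans h2)
      · subst h1; exact Or.inr h2
      · subst h2; exact Or.inr h1
      · exact Or.inr ⟨h1.1, h2.2⟩
  have FWlt : ∀ i, i < n → FW P n i < n := by
    intro i hi
    rcases ltlem i (FW P n i) (clsmem i) with h | h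
    · omega
    · exact h.2
  have key : ∀ i j, i < n → j < n → FW P n i = FW P n j → w i = w j := by
    intro i j hi hj hFW
    apply part2 i j hi hj
    rw [← clsFW i, hFW, clsFW j]
  set f : ℕ → A := fun v => if h : ∃ i, i < n ∧ FW P n i = v then w h.choose else w 0 with hf
  apply Finset.card_le_card_of_surjOn f
  intro a ha
  simp only [Finset.coe_image, Finset.coe_range, Set.mem_image, Set.mem_Iio] at ha ⊢
  obtain ⟨i, hi, hia⟩ := ha
  refine ⟨FW P n i, ⟨i, hi, rfl⟩, ?_⟩
  have hex : ∃ j, j < n ∧ FW P n j = FW P n i := ⟨i, hi, rfl⟩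
  simp only [hf, dif_pos hex]
  rw [key hex.choose i hex.choose_spec.1 hi hex.choose_spec.2, hia]
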